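/- The function Φ is a positive, strictly increasing, twice differentiable solution of the eigenvalue equation of the Ornstein–Uhlenbeck generator: for every x ∈ ℝ, (σ̂²/2)·Φ''(x) + (c - βx)·Φ'(x) - δ·Φ(x) = 0. -/

import Mathlib

open MeasureTheory Real

/-- `Fa a x = ∫₀^∞ exp(-t² - 2xt) · t^a dt`, a Hermite-type function of negative degree. -/
noncomputable def Fa (a x : ℝ) : ℝ :=
  ∫ t in Set.Ioi (0 : ℝ), Real.exp (-(t ^ 2) - 2 * x * t) * t ^ a

open Set Filter Metric
open scoped ENNReal Topology

lemma Fa_integrableOn {a : ℝ} (ha : -1 < a) (x : ℝ) :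
    IntegrableOn (fun t : ℝ => Real.exp (-(t ^ 2) - 2 * x * t) * t ^ a) (Set.Ioi 0) := by
  have hmeas : AEStronglyMeasurable (fun t : ℝ => Real.exp (-(t ^ 2) - 2 * x * t) * t ^ a)
      (volume.restrict (Set.Ioi 0)) := by
    refine ContinuousOn.aestronglyMeasurable ?_ measurableSet_Ioi
    refine ContinuousOn.mul (Continuous.continuousOn (by continuity)) ?_
    intro t ht
    exact (Real.continuousAt_rpow_const _ _ (Or.inl (ne_of_gt ht))).continuousWithinAt
  have hG : IntegrableOn (fun t : ℝ => Real.exp (-t) * t ^ a) (Set.Ioi 0) := by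
    have := Real.GammaIntegral_convergent (s := a + 1) (by linarith)
    simpa using this
  refine Integrable.mono' ((hG.const_mul (Real.exp ((2*x-1)^2/4)))) hmeas ?_
  filter_upwards [ae_restrict_mem measurableSet_Ioi] with t ht
  have ht' : (0:ℝ) < t := ht
  have h1 : Real.exp (-(t ^ 2) - 2 * x * t) ≤ Real.exp ((2*x-1)^2/4) * Real.exp (-t) := by
    rw [← Real.exp_add]
    apply Real.exp_le_exp.2
    nlinarith [sq_nonneg (t + (2*x-1)/2)]
  have h2 : (0:ℝ) ≤ t ^ a := Real.rpow_nonneg ht'.le a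
  rw [Real.norm_eq_abs, abs_of_nonneg (by positivity)]
  calc Real.exp (-(t ^ 2) - 2 * x * t) * t ^ a
      ≤ (Real.exp ((2*x-1)^2/4) * Real.exp (-t)) * t ^ a := by
        exact mul_le_mul_of_nonneg_right h1 h2
    _ = Real.exp ((2*x-1)^2/4) * (Real.exp (-t) * t ^ a) := by ring

lemma Fa_pos {a : ℝ} (ha : -1 < a) (x : ℝ) : 0 < Fa a x := by
  rw [Fa, setIntegral_pos_iff_support_of_nonneg_ae]
  · have hsub : Set.Ioi (0:ℝ) ⊆
        Function.support (fun t : ℝ => Real.exp (-(t ^ 2) - 2 * x * t) * t ^ a) ∩ Set.Ioi 0 := by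
      intro t ht
      have ht' : (0:ℝ) < t := ht
      refine ⟨?_, ht⟩
      simp only [Function.mem_support]
      positivity
    calc (0:ℝ≥0∞) < volume (Set.Ioi (0:ℝ)) := by simp
      _ ≤ _ := measure_mono hsub
  · filter_upwards [ae_restrict_mem measurableSet_Ioi] with t ht
    have ht' : (0:ℝ) < t := ht
    positivity
  · exact Fa_integrableOn ha x



lemma continuousOn_integrand (a x : ℝ) :
    ContinuousOn (fun t : ℝ => Real.exp (-(t ^ 2) - 2 * x * t) * t ^ a) (Set.Ioi 0) := by
  refine ContinuousOn.mul (Continuous.continuousOn (by continuity)) ?_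
  intro t ht
  exact (Real.continuousAt_rpow_const _ _ (Or.inl (ne_of_gt ht))).continuousWithinAt

lemma Fa_hasDerivAt {a : ℝ} (ha : -1 < a) (x₀ : ℝ) :
    HasDerivAt (Fa a) (-2 * Fa (a + 1) x₀) x₀ := by
  have ha' : (-1:ℝ) < a + 1 := by linarith
  set μ := volume.restrict (Set.Ioi (0:ℝ))
  set F : ℝ → ℝ → ℝ := fun x t => Real.exp (-(t ^ 2) - 2 * x * t) * t ^ a with hF
  set F' : ℝ → ℝ → ℝ := fun x t => (-2 * t) * (Real.exp (-(t ^ 2) - 2 * x * t) * t ^ a) with hF'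
  have hF_meas : ∀ᶠ x in 𝓝 x₀, AEStronglyMeasurable (F x) μ := by
    filter_upwards with x
    exact (continuousOn_integrand a x).aestronglyMeasurable measurableSet_Ioi
  have hF_int : Integrable (F x₀) μ := Fa_integrableOn ha x₀
  have hF'_meas : AEStronglyMeasurable (F' x₀) μ := by
    refine ContinuousOn.aestronglyMeasurable ?_ measurableSet_Ioi
    exact ContinuousOn.mul ((by continuity : Continuous fun t:ℝ => -2*t).continuousOn)
      (continuousOn_integrand a x₀)
  have h_bound : ∀ᵐ t ∂μ, ∀ x ∈ ball x₀ 1, ‖F' x t‖ ≤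
      2 * (Real.exp (-(t ^ 2) - 2 * (x₀ - 1) * t) * t ^ (a + 1)) := by
    filter_upwards [ae_restrict_mem measurableSet_Ioi] with t ht x hx
    have ht' : (0:ℝ) < t := ht
    have hxx : x₀ - 1 ≤ x := by
      have := (abs_lt.1 (by simpa [Real.dist_eq] using mem_ball.1 hx)).1
      linarith
    have hexp : Real.exp (-(t ^ 2) - 2 * x * t) ≤ Real.exp (-(t ^ 2) - 2 * (x₀ - 1) * t) := by
      apply Real.exp_le_exp.2; nlinarith
    have h1 : t ^ (a + 1) = t ^ a * t := Real.rpow_add_one (ne_of_gt ht') a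
    have hE : (0:ℝ) < Real.exp (-(t ^ 2) - 2 * x * t) := Real.exp_pos _
    have hta : (0:ℝ) < t ^ a := Real.rpow_pos_of_pos ht' a
    have habs : ‖F' x t‖ = 2 * t * (Real.exp (-(t ^ 2) - 2 * x * t) * t ^ a) := by
      rw [hF', Real.norm_eq_abs, abs_mul, abs_of_nonpos (by linarith : -2*t ≤ 0),
        abs_of_nonneg (by positivity)]
      ring
    rw [habs, h1]
    nlinarith [mul_le_mul_of_nonneg_right hexp (by positivity : (0:ℝ) ≤ t ^ a * t)]
  have h_diff : ∀ᵐ t ∂μ, ∀ x ∈ ball x₀ 1, HasDerivAt (F · t) (F' x t) x := by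
    filter_upwards with t x _
    have h1 : HasDerivAt (fun y : ℝ => -(t ^ 2) - 2 * y * t) (-(2 * t)) x := by
      have h2 : HasDerivAt (fun y : ℝ => 2 * y * t) (2 * t) x := by
        simpa using (((hasDerivAt_id x).const_mul 2).mul_const t)
      simpa using h2.const_sub (-(t ^ 2))
    have := (h1.exp).mul_const (t ^ a)
    refine this.congr_deriv ?_
    show _ = (-2 * t) * (Real.exp (-(t ^ 2) - 2 * x * t) * t ^ a)
    ring
  have key := hasDerivAt_integral_of_dominated_loc_of_deriv_le (ball_mem_nhds x₀ one_pos) hF_meas hF_int hF'_meas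
    h_bound ((Fa_integrableOn ha' (x₀ - 1)).const_mul 2) h_diff
  have h2 : (∫ t, F' x₀ t ∂μ) = -2 * Fa (a + 1) x₀ := by
    rw [Fa, ← MeasureTheory.integral_const_mul]
    refine setIntegral_congr_fun measurableSet_Ioi (fun t ht => ?_)
    have ht' : (0:ℝ) < t := ht
    rw [Real.rpow_add_one (ne_of_gt ht')]
    simp [hF']; ring
  rw [← h2]
  exact key.2



lemma Fa_identity {a : ℝ} (ha : -1 < a) (x : ℝ) :
    (a + 1) * Fa a x - 2 * x * Fa (a + 1) x - 2 * Fa (a + 2) x = 0 := by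
  have ha1 : (-1:ℝ) < a + 1 := by linarith
  have ha2 : (-1:ℝ) < a + 2 := by linarith
  set g : ℝ → ℝ := fun t => Real.exp (-(t ^ 2) - 2 * x * t) * t ^ (a + 1) with hg
  set g' : ℝ → ℝ := fun t =>
    (a + 1) * (Real.exp (-(t ^ 2) - 2 * x * t) * t ^ a)
    - 2 * x * (Real.exp (-(t ^ 2) - 2 * x * t) * t ^ (a + 1))
    - 2 * (Real.exp (-(t ^ 2) - 2 * x * t) * t ^ (a + 2)) with hg'
  have hcont : ContinuousWithinAt g (Set.Ici 0) 0 := by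
    have : ContinuousAt g 0 := by
      refine ContinuousAt.mul (Continuous.continuousAt (by continuity)) ?_
      exact Real.continuousAt_rpow_const _ _ (Or.inr (by linarith))
    exact this.continuousWithinAt
  have hderiv : ∀ t ∈ Set.Ioi (0:ℝ), HasDerivAt g (g' t) t := by
    intro t ht
    have ht' : (0:ℝ) < t := ht
    have h1 : HasDerivAt (fun s : ℝ => -(s ^ 2) - 2 * x * s) (-(2 * t) - 2 * x) t := by
      have hp : HasDerivAt (fun s : ℝ => s ^ 2) (2 * t) t := by
        simpa using hasDerivAt_pow 2 t
      have hq : HasDerivAt (fun s : ℝ => 2 * x * s) (2 * x) t := by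
        simpa using (hasDerivAt_id t).const_mul (2 * x)
      exact hp.neg.sub hq
    have h2 : HasDerivAt (fun s : ℝ => s ^ (a + 1)) ((a + 1) * t ^ a) t := by
      have := Real.hasDerivAt_rpow_const (x := t) (p := a + 1) (Or.inl (ne_of_gt ht'))
      simpa using this
    have h3 := (h1.exp).mul h2
    refine h3.congr_deriv ?_
    have e1 : t ^ (a + 1) = t ^ a * t := Real.rpow_add_one (ne_of_gt ht') a
    have e2 : t ^ (a + 2) = t ^ (a + 1) * t := by
      have : a + 2 = (a + 1) + 1 := by ring
      rw [this, Real.rpow_add_one (ne_of_gt ht')]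
    show _ = (a + 1) * (Real.exp (-(t ^ 2) - 2 * x * t) * t ^ a)
      - 2 * x * (Real.exp (-(t ^ 2) - 2 * x * t) * t ^ (a + 1))
      - 2 * (Real.exp (-(t ^ 2) - 2 * x * t) * t ^ (a + 2))
    rw [e2, e1]
    ring
  have hint : IntegrableOn g' (Set.Ioi 0) := by
    refine (((Fa_integrableOn ha x).const_mul (a+1)).sub
      ((Fa_integrableOn ha1 x).const_mul (2*x))).sub
      ((Fa_integrableOn ha2 x).const_mul 2)
  have htop : Tendsto g atTop (𝓝 0) := by
    have hb : Tendsto (fun t : ℝ => Real.exp ((2*x-1)^2/4) * (t ^ (a+1) * Real.exp (-1 * t)))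
        atTop (𝓝 0) := by
      have := (tendsto_rpow_mul_exp_neg_mul_atTop_nhds_zero (a+1) 1 one_pos).const_mul
        (Real.exp ((2*x-1)^2/4))
      simpa using this
    refine squeeze_zero' ?_ ?_ hb
    · filter_upwards [eventually_gt_atTop (0:ℝ)] with t ht
      positivity
    · filter_upwards [eventually_gt_atTop (0:ℝ)] with t ht
      have h1 : Real.exp (-(t ^ 2) - 2 * x * t) ≤ Real.exp ((2*x-1)^2/4) * Real.exp (-t) := by
        rw [← Real.exp_add]
        apply Real.exp_le_exp.2
        nlinarith [sq_nonneg (t + (2*x-1)/2)]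
      have h2 : (0:ℝ) ≤ t ^ (a+1) := Real.rpow_nonneg ht.le _
      calc g t ≤ (Real.exp ((2*x-1)^2/4) * Real.exp (-t)) * t ^ (a+1) :=
            mul_le_mul_of_nonneg_right h1 h2
        _ = Real.exp ((2*x-1)^2/4) * (t ^ (a+1) * Real.exp (-1 * t)) := by
            rw [neg_one_mul]; ring
  have hibp := integral_Ioi_of_hasDerivAt_of_tendsto hcont hderiv hint htop
  have hg0 : g 0 = 0 := by
    simp [hg, Real.zero_rpow (by linarith : a + 1 ≠ 0)]
  rw [hg0, sub_zero] at hibp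
  have hsplit : ∫ t in Set.Ioi (0:ℝ), g' t =
      (a + 1) * Fa a x - 2 * x * Fa (a + 1) x - 2 * Fa (a + 2) x := by
    rw [hg']
    rw [MeasureTheory.integral_sub, MeasureTheory.integral_sub,
      MeasureTheory.integral_const_mul, MeasureTheory.integral_const_mul,
      MeasureTheory.integral_const_mul]
    · rfl
    · exact (Fa_integrableOn ha x).const_mul _
    · exact (Fa_integrableOn ha1 x).const_mul _
    · exact ((Fa_integrableOn ha x).const_mul _).sub ((Fa_integrableOn ha1 x).const_mul _)
    · exact (Fa_integrableOn ha2 x).const_mul _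
  rw [hsplit] at hibp
  linarith [hibp]

/-- `Phi β σh δ c x = F_a(u(x))` with `a = δ/β - 1` and `u(x) = (c - βx)/(√β·σ̂)`. -/
noncomputable def Phi (β σh δ c : ℝ) (x : ℝ) : ℝ :=
  Fa (δ / β - 1) ((c - β * x) / (Real.sqrt β * σh))

/-- `Φ` is a positive, strictly increasing, twice differentiable solution of
`(σ̂²/2)·Φ'' + (c - βx)·Φ' - δ·Φ = 0`, the eigenvalue equation of the OU generator. -/
theorem Phi_eigenfunction (β σh δ c : ℝ) (hβ : 0 < β) (hσ : 0 < σh) (hδ : 0 < δ) :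
    (∀ x : ℝ, 0 < Phi β σh δ c x) ∧
    StrictMono (Phi β σh δ c) ∧
    Differentiable ℝ (Phi β σh δ c) ∧
    Differentiable ℝ (deriv (Phi β σh δ c)) ∧
    (∀ x : ℝ, σh ^ 2 / 2 * deriv (deriv (Phi β σh δ c)) x
        + (c - β * x) * deriv (Phi β σh δ c) x - δ * Phi β σh δ c x = 0) := by
  have hs : 0 < Real.sqrt β * σh := mul_pos (Real.sqrt_pos.2 hβ) hσ
  set s := Real.sqrt β * σh with hsdef
  have hsne : s ≠ 0 := ne_of_gt hs
  have ha : (-1:ℝ) < δ / β - 1 := by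
    have : 0 < δ / β := div_pos hδ hβ
    linarith
  set a := δ / β - 1 with hadef
  have ha1 : (-1:ℝ) < a + 1 := by linarith
  set u : ℝ → ℝ := fun x => (c - β * x) / s with hu
  have hud : ∀ x, HasDerivAt u (-β / s) x := by
    intro x
    have h1 : HasDerivAt (fun x : ℝ => c - β * x) (-β) x := by
      simpa using ((hasDerivAt_id x).const_mul β).const_sub c
    simpa [hu] using h1.div_const s
  have hPhi : ∀ x, HasDerivAt (Phi β σh δ c) (2 * (β / s) * Fa (a + 1) (u x)) x := by
    intro x
    have h := (Fa_hasDerivAt ha (u x)).comp x (hud x)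
    have h2 : -2 * Fa (a + 1) (u x) * (-β / s) = 2 * (β / s) * Fa (a + 1) (u x) := by ring
    rw [h2] at h
    exact h
  have hD1 : deriv (Phi β σh δ c) = fun x => 2 * (β / s) * Fa (a + 1) (u x) :=
    funext fun x => (hPhi x).deriv
  have hPhi' : ∀ x, HasDerivAt (deriv (Phi β σh δ c))
      (4 * (β / s) ^ 2 * Fa (a + 1 + 1) (u x)) x := by
    intro x
    rw [hD1]
    have h := ((Fa_hasDerivAt ha1 (u x)).comp x (hud x)).const_mul (2 * (β / s))
    have h2 : 2 * (β / s) * (-2 * Fa (a + 1 + 1) (u x) * (-β / s))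
        = 4 * (β / s) ^ 2 * Fa (a + 1 + 1) (u x) := by ring
    rw [h2] at h
    exact h
  have hD2 : deriv (deriv (Phi β σh δ c)) = fun x => 4 * (β / s) ^ 2 * Fa (a + 1 + 1) (u x) :=
    funext fun x => (hPhi' x).deriv
  refine ⟨fun x => Fa_pos ha _, ?_, fun x => (hPhi x).differentiableAt,
    fun x => (hPhi' x).differentiableAt, ?_⟩
  · apply strictMono_of_deriv_pos
    intro x
    rw [hD1]
    exact mul_pos (by positivity) (Fa_pos ha1 _)
  · intro x
    rw [hD2, hD1]
    simp only
    have key := Fa_identity ha (u x)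
    have ea : a + 1 + 1 = a + 2 := by ring
    rw [ea]
    have hP : Phi β σh δ c x = Fa a (u x) := rfl
    rw [hP]
    have hs2 : s ^ 2 = β * σh ^ 2 := by
      rw [hsdef, mul_pow, Real.sq_sqrt hβ.le]
    have huxs : c - β * x = u x * s := by
      rw [hu]; field_simp
    have hδa : β * (a + 1) = δ := by
      rw [hadef]; field_simp; ring
    rw [huxs, ← hδa]
    have hq : (β / s) ^ 2 = β / σh ^ 2 := by
      rw [div_pow, hs2, pow_two, mul_div_mul_left _ _ (ne_of_gt hβ)]
    rw [hq]
    set F0 := Fa a (u x) with hF0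
    set F1 := Fa (a + 1) (u x) with hF1
    set F2 := Fa (a + 2) (u x) with hF2
    set U := u x with hUdef
    have e1 : σh ^ 2 / 2 * (4 * (β / σh ^ 2) * F2) = 2 * β * F2 := by
      field_simp
      ring
    have e2 : U * s * (2 * (β / s) * F1) = 2 * β * (U * F1) := by
      field_simp
    rw [e1, e2]
    linear_combination (-β) * key
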